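/- With θ as defined, for every integer n > 9, if θ(n) < (2^(2^(n−5)) − 1)^(2^(n−5)) + 1, then 2^(2^(n−5)) + 1 is composite. -/

import Mathlib

/-- An equation of `E_n`: `Sum.inl (i, j, k)` means `xᵢ · xⱼ = x_k`,
`Sum.inr (i, k)` means `xᵢ + 1 = x_k`. -/
def SatisfiesEq (n : ℕ) (x : Fin n → ℕ)
    (e : (Fin n × Fin n × Fin n) ⊕ (Fin n × Fin n)) : Prop :=
  match e with
  | Sum.inl (i, j, k) => x i * x j = x k
  | Sum.inr (i, k) => x i + 1 = x k

/-- `x` is a positive-integer solution of the system `S ⊆ E_n`. -/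
def IsSolution (n : ℕ) (S : Set ((Fin n × Fin n × Fin n) ⊕ (Fin n × Fin n)))
    (x : Fin n → ℕ) : Prop :=
  (∀ i, 0 < x i) ∧ ∀ e ∈ S, SatisfiesEq n x e

/-- `θ(n)`: the smallest positive integer `b` such that every system `S ⊆ E_n` which is
solvable in positive integers and has only finitely many solutions in positive integers
has a solution with all entries in `[1, b]`. -/
noncomputable def theta (n : ℕ) : ℕ :=
  sInf { b : ℕ | 0 < b ∧ ∀ S : Set ((Fin n × Fin n × Fin n) ⊕ (Fin n × Fin n)),
    (∃ x, IsSolution n S x) → { x | IsSolution n S x }.Finite →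
    ∃ x, IsSolution n S x ∧ ∀ i, x i ≤ b }

namespace TysAux

/-- index `i` as an element of `Fin n` -/
def fI (n : ℕ) (hn : 0 < n) (i : ℕ) : Fin n := ⟨i % n, Nat.mod_lt _ hn⟩

lemma fI_val (n : ℕ) (hn : 0 < n) (i : ℕ) (hi : i < n) : (fI n hn i).val = i :=
  Nat.mod_eq_of_lt hi

/-- the intended solution, as a function of the raw index -/
def g (m : ℕ) (i : ℕ) : ℕ :=
  if i ≤ m then (2 ^ 2 ^ m - 1) ^ 2 ^ i
  else if i = m + 1 then (2 ^ 2 ^ m - 1) ^ 2 ^ m + 1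
  else if i = m + 2 then 2 ^ 2 ^ m
  else if i = m + 3 then 2 ^ 2 ^ m + 1
  else ((2 ^ 2 ^ m - 1) ^ 2 ^ m + 1) / (2 ^ 2 ^ m + 1)

lemma g_le (m i : ℕ) (h : i ≤ m) : g m i = (2 ^ 2 ^ m - 1) ^ 2 ^ i := if_pos h

lemma g_m1 (m : ℕ) : g m (m + 1) = (2 ^ 2 ^ m - 1) ^ 2 ^ m + 1 := by
  unfold g
  rw [if_neg (show ¬ (m + 1 ≤ m) by omega), if_pos rfl]

lemma g_m2 (m : ℕ) : g m (m + 2) = 2 ^ 2 ^ m := by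
  unfold g
  rw [if_neg (show ¬ (m + 2 ≤ m) by omega), if_neg (show ¬ (m + 2 = m + 1) by omega),
    if_pos rfl]

lemma g_m3 (m : ℕ) : g m (m + 3) = 2 ^ 2 ^ m + 1 := by
  unfold g
  rw [if_neg (show ¬ (m + 3 ≤ m) by omega), if_neg (show ¬ (m + 3 = m + 1) by omega),
    if_neg (show ¬ (m + 3 = m + 2) by omega), if_pos rfl]

lemma g_m4 (m : ℕ) : g m (m + 4) = ((2 ^ 2 ^ m - 1) ^ 2 ^ m + 1) / (2 ^ 2 ^ m + 1) := by
  unfold g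
  rw [if_neg (show ¬ (m + 4 ≤ m) by omega), if_neg (show ¬ (m + 4 = m + 1) by omega),
    if_neg (show ¬ (m + 4 = m + 2) by omega), if_neg (show ¬ (m + 4 = m + 3) by omega)]

/-- Tyszka's system. -/
def sys (n m : ℕ) (hn : 0 < n) :
    Set ((Fin n × Fin n × Fin n) ⊕ (Fin n × Fin n)) :=
  {e | (∃ i, i < m ∧ e = Sum.inl (fI n hn i, fI n hn i, fI n hn (i+1))) ∨
    e = Sum.inr (fI n hn m, fI n hn (m+1)) ∨
    e = Sum.inr (fI n hn 0, fI n hn (m+2)) ∨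
    e = Sum.inr (fI n hn (m+2), fI n hn (m+3)) ∨
    e = Sum.inl (fI n hn (m+3), fI n hn (m+4), fI n hn (m+1))}

def sol (n m : ℕ) : Fin n → ℕ := fun i => g m i.val

lemma key (m a : ℕ) (hm : 0 < m) :
    ((a : ℤ) + 2) ∣ ((a : ℤ) ^ 2 ^ m + 1) - ((2 : ℤ) ^ 2 ^ m + 1) := by
  have h1 : (a : ℤ) ≡ -2 [ZMOD ((a : ℤ) + 2)] :=
    Int.modEq_iff_dvd.mpr ⟨-1, by ring⟩
  have h2 := h1.pow (2 ^ m)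
  have h3 : ((-2 : ℤ)) ^ 2 ^ m = 2 ^ 2 ^ m :=
    Even.neg_pow ⟨2 ^ (m - 1), by rw [← two_mul, ← pow_succ']; congr 1; omega⟩ 2
  rw [h3] at h2
  exact ((h2.add_right 1).symm).dvd

lemma two_le (m : ℕ) : 2 ≤ 2 ^ 2 ^ m :=
  le_trans (by norm_num) (Nat.pow_le_pow_right (by norm_num) (Nat.one_le_two_pow))

lemma three_le (m : ℕ) (hm : 0 < m) : 3 ≤ 2 ^ 2 ^ m := by
  calc (3 : ℕ) ≤ 2 ^ 2 := by norm_num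
  _ ≤ 2 ^ 2 ^ m := Nat.pow_le_pow_right (by norm_num) (Nat.le_self_pow hm.ne' 2)

/-- `p ∣ B` -/
lemma p_dvd_B (m : ℕ) (hm : 0 < m) :
    (2 ^ 2 ^ m + 1) ∣ ((2 ^ 2 ^ m - 1) ^ 2 ^ m + 1) := by
  have h2 := two_le m
  have hk := key m (2 ^ 2 ^ m - 1) hm
  have hc : ((2 ^ 2 ^ m - 1 : ℕ) : ℤ) + 2 = ((2 ^ 2 ^ m + 1 : ℕ) : ℤ) := by
    push_cast [Nat.cast_sub (by omega : (1:ℕ) ≤ 2 ^ 2 ^ m)]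
    ring
  rw [hc] at hk
  have hp : ((2 ^ 2 ^ m + 1 : ℕ) : ℤ) ∣ ((2 : ℤ) ^ 2 ^ m + 1) :=
    ⟨1, by push_cast; ring⟩
  have hsum := dvd_add hk hp
  have h4 : ((2 ^ 2 ^ m + 1 : ℕ) : ℤ) ∣ (((2 ^ 2 ^ m - 1) ^ 2 ^ m + 1 : ℕ) : ℤ) := by
    have e : (((2 ^ 2 ^ m - 1) ^ 2 ^ m + 1 : ℕ) : ℤ)
        = (((2 ^ 2 ^ m - 1 : ℕ) : ℤ) ^ 2 ^ m + 1 - ((2:ℤ) ^ 2 ^ m + 1)) + ((2:ℤ) ^ 2 ^ m + 1) := by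
      push_cast
      ring
    rw [e]
    exact hsum
  exact_mod_cast h4

lemma p_le_B (m : ℕ) (hm : 0 < m) :
    2 ^ 2 ^ m + 1 ≤ (2 ^ 2 ^ m - 1) ^ 2 ^ m + 1 := by
  have h3 := three_le m hm
  have h4 : 2 ≤ 2 ^ m := by
    calc (2:ℕ) = 2 ^ 1 := rfl
    _ ≤ 2 ^ m := Nat.pow_le_pow_right (by norm_num) hm
  have hu : 2 ≤ 2 ^ 2 ^ m - 1 := by omega
  have h5 : 2 ^ 2 ^ m ≤ (2 ^ 2 ^ m - 1) ^ 2 ^ m := by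
    calc 2 ^ 2 ^ m = (2 ^ 2 ^ m - 1) + 1 := by omega
    _ ≤ (2 ^ 2 ^ m - 1) * (2 ^ 2 ^ m - 1) := by nlinarith
    _ = (2 ^ 2 ^ m - 1) ^ 2 := (sq _).symm
    _ ≤ (2 ^ 2 ^ m - 1) ^ 2 ^ m := Nat.pow_le_pow_right (by omega) h4
  omega

/-- the intended solution solves the system -/
lemma sol_isSolution (n m : ℕ) (hm : 0 < m) (hn : n = m + 5) (hn0 : 0 < n) :
    IsSolution n (sys n m hn0) (sol n m) := by
  have h2 := two_le m
  have hpB := p_dvd_B m hm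
  have hpos : 0 < 2 ^ 2 ^ m - 1 := by omega
  constructor
  · intro i
    unfold sol g
    split_ifs with h1 h2' h3 h4
    · exact pow_pos hpos _
    · exact Nat.succ_pos _
    · omega
    · omega
    · exact Nat.div_pos (p_le_B m hm) (by omega)
  · intro e he
    rcases he with ⟨i, hi, rfl⟩ | rfl | rfl | rfl | rfl
    · show sol n m _ * sol n m _ = sol n m _
      unfold sol
      rw [fI_val n hn0 i (by omega), fI_val n hn0 (i+1) (by omega)]
      rw [g_le m i (by omega), g_le m (i+1) (by omega)]
      rw [← pow_add]
      congr 1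
      rw [pow_succ]
      ring
    · show sol n m _ + 1 = sol n m _
      unfold sol
      rw [fI_val n hn0 m (by omega), fI_val n hn0 (m+1) (by omega)]
      rw [g_le m m (le_refl m), g_m1 m]
    · show sol n m _ + 1 = sol n m _
      unfold sol
      rw [fI_val n hn0 0 (by omega), fI_val n hn0 (m+2) (by omega)]
      rw [g_le m 0 (by omega), g_m2 m]
      rw [pow_zero, pow_one]
      omega
    · show sol n m _ + 1 = sol n m _
      unfold sol
      rw [fI_val n hn0 (m+2) (by omega), fI_val n hn0 (m+3) (by omega)]
      rw [g_m2 m, g_m3 m]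
    · show sol n m _ * sol n m _ = sol n m _
      unfold sol
      rw [fI_val n hn0 (m+3) (by omega), fI_val n hn0 (m+4) (by omega),
        fI_val n hn0 (m+1) (by omega)]
      rw [g_m3 m, g_m4 m, g_m1 m]
      exact Nat.mul_div_cancel' hpB

/-- any solution equals the intended one (given primality) -/
lemma sol_unique (n m : ℕ) (hm : 0 < m) (hn : n = m + 5) (hn0 : 0 < n)
    (hp : Nat.Prime (2 ^ 2 ^ m + 1)) (x : Fin n → ℕ)
    (hx : IsSolution n (sys n m hn0) x) : x = sol n m := by
  have h2 := two_le m
  obtain ⟨hpos, heq⟩ := hx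
  set a := x (fI n hn0 0) with ha
  have hchain : ∀ i, i ≤ m → x (fI n hn0 i) = a ^ 2 ^ i := by
    intro i
    induction i with
    | zero => intro _; simp; rfl
    | succ j ih =>
      intro hj
      have hj' : j < m := by omega
      have he' : x (fI n hn0 j) * x (fI n hn0 j) = x (fI n hn0 (j+1)) :=
        heq _ (Or.inl ⟨j, hj', rfl⟩)
      rw [ih (by omega)] at he'
      rw [← he', ← pow_add]
      congr 1
      rw [pow_succ]
      ring
  have hs : x (fI n hn0 (m+1)) = a ^ 2 ^ m + 1 := by
    have he : x (fI n hn0 m) + 1 = x (fI n hn0 (m+1)) :=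
      heq _ (Or.inr (Or.inl rfl))
    rw [hchain m (le_refl m)] at he
    omega
  have hu : x (fI n hn0 (m+2)) = a + 1 := by
    have he : x (fI n hn0 0) + 1 = x (fI n hn0 (m+2)) :=
      heq _ (Or.inr (Or.inr (Or.inl rfl)))
    omega
  have hv : x (fI n hn0 (m+3)) = a + 2 := by
    have he : x (fI n hn0 (m+2)) + 1 = x (fI n hn0 (m+3)) :=
      heq _ (Or.inr (Or.inr (Or.inr (Or.inl rfl))))
    omega
  have hw : (a + 2) * x (fI n hn0 (m+4)) = a ^ 2 ^ m + 1 := by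
    have he : x (fI n hn0 (m+3)) * x (fI n hn0 (m+4)) = x (fI n hn0 (m+1)) :=
      heq _ (Or.inr (Or.inr (Or.inr (Or.inr rfl))))
    rw [hv, hs] at he
    exact he
  have hdvd : (a + 2) ∣ (a ^ 2 ^ m + 1) := ⟨_, hw.symm⟩
  have hdvdZ : ((a : ℤ) + 2) ∣ ((2 : ℤ) ^ 2 ^ m + 1) := by
    have h1 : ((a : ℤ) + 2) ∣ ((a : ℤ) ^ 2 ^ m + 1) := by
      obtain ⟨k, hk⟩ := hdvd
      exact ⟨(k : ℤ), by exact_mod_cast congrArg (Nat.cast : ℕ → ℤ) hk⟩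
    have hk2 := key m a hm
    have hd := dvd_sub h1 hk2
    have e : ((a : ℤ) ^ 2 ^ m + 1) - (((a : ℤ) ^ 2 ^ m + 1) - ((2:ℤ) ^ 2 ^ m + 1))
        = (2:ℤ) ^ 2 ^ m + 1 := by ring
    rw [e] at hd
    exact hd
  have hdvdN : (a + 2) ∣ (2 ^ 2 ^ m + 1) := by
    have : ((a + 2 : ℕ) : ℤ) ∣ ((2 ^ 2 ^ m + 1 : ℕ) : ℤ) := by push_cast; exact hdvdZ
    exact_mod_cast this
  have ha1 : 1 ≤ a := hpos _
  have hap : a + 2 = 2 ^ 2 ^ m + 1 := by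
    rcases (Nat.Prime.eq_one_or_self_of_dvd hp _ hdvdN) with h' | h'
    · omega
    · exact h'
  have haval : a = 2 ^ 2 ^ m - 1 := by omega
  have hk' : x (fI n hn0 (m+4)) = ((2 ^ 2 ^ m - 1) ^ 2 ^ m + 1) / (2 ^ 2 ^ m + 1) := by
    rw [hap, haval] at hw
    rw [← hw]
    rw [Nat.mul_div_cancel_left _ (by omega : 0 < 2 ^ 2 ^ m + 1)]
  funext i
  have hieq : i = fI n hn0 i.val := by
    apply Fin.ext
    rw [fI_val n hn0 i.val i.isLt]
  have hsol_eval : ∀ j : ℕ, j < n → sol n m (fI n hn0 j) = g m j := by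
    intro j hj
    show g m (fI n hn0 j).val = g m j
    rw [fI_val n hn0 j hj]
  rcases Nat.lt_or_ge i.val (m + 1) with hi | hi
  · rw [hieq, hchain i.val (by omega), haval, hsol_eval i.val i.isLt,
      g_le m i.val (by omega)]
  · have hcases : i.val = m + 1 ∨ i.val = m + 2 ∨ i.val = m + 3 ∨ i.val = m + 4 := by
      have := i.isLt
      omega
    rcases hcases with hc' | hc' | hc' | hc'
    · rw [hieq, hc', hs, haval, hsol_eval (m+1) (by omega), g_m1 m]
    · rw [hieq, hc', hu, haval, hsol_eval (m+2) (by omega), g_m2 m]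
      omega
    · rw [hieq, hc', hv, haval, hsol_eval (m+3) (by omega), g_m3 m]
      omega
    · rw [hieq, hc', hk', hsol_eval (m+4) (by omega), g_m4 m]

/-- the set defining θ is nonempty -/
lemma theta_set_nonempty (n : ℕ) :
    Set.Nonempty { b : ℕ | 0 < b ∧ ∀ S : Set ((Fin n × Fin n × Fin n) ⊕ (Fin n × Fin n)),
      (∃ x, IsSolution n S x) → { x | IsSolution n S x }.Finite →
      ∃ x, IsSolution n S x ∧ ∀ i, x i ≤ b } := by
  classical
  set T := (Fin n × Fin n × Fin n) ⊕ (Fin n × Fin n)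
  set F : Set T → ℕ := fun S =>
    if h : ∃ x, IsSolution n S x then Finset.univ.sup h.choose else 0 with hF
  have hfin : (Set.range F).Finite := Set.finite_range F
  obtain ⟨b, hb⟩ := hfin.bddAbove
  refine ⟨b + 1, Nat.succ_pos b, ?_⟩
  intro S hS _
  refine ⟨hS.choose, hS.choose_spec, ?_⟩
  intro i
  have h1 : hS.choose i ≤ Finset.univ.sup hS.choose :=
    Finset.le_sup (Finset.mem_univ i)
  have h2 : F S = Finset.univ.sup hS.choose := by
    rw [hF]
    exact dif_pos hS
  have h3 : F S ≤ b := hb (Set.mem_range_self S)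
  omega

end TysAux

theorem fermat_composite_of_theta_lt (n : ℕ) (hn : 9 < n)
    (h : theta n < (2 ^ 2 ^ (n - 5) - 1) ^ 2 ^ (n - 5) + 1) :
    ¬ Nat.Prime (2 ^ 2 ^ (n - 5) + 1) := by
  intro hp
  set m := n - 5 with hmdef
  have hm : 0 < m := by omega
  have hn5 : n = m + 5 := by omega
  have hn0 : 0 < n := by omega
  have hθ := Nat.sInf_mem (TysAux.theta_set_nonempty n)
  obtain ⟨-, hθ2⟩ := hθ
  have hsol := TysAux.sol_isSolution n m hm hn5 hn0
  have hfin : { x | IsSolution n (TysAux.sys n m hn0) x }.Finite := by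
    apply Set.Finite.subset (Set.finite_singleton (TysAux.sol n m))
    intro x hx
    exact TysAux.sol_unique n m hm hn5 hn0 hp x hx
  obtain ⟨x, hx, hxb⟩ := hθ2 (TysAux.sys n m hn0) ⟨_, hsol⟩ hfin
  have hxeq := TysAux.sol_unique n m hm hn5 hn0 hp x hx
  have hB : x (TysAux.fI n hn0 (m+1)) = (2 ^ 2 ^ m - 1) ^ 2 ^ m + 1 := by
    rw [hxeq]
    show TysAux.g m (TysAux.fI n hn0 (m+1)).val = _
    rw [TysAux.fI_val n hn0 (m+1) (by omega), TysAux.g_m1 m]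
  have hge : (2 ^ 2 ^ m - 1) ^ 2 ^ m + 1 ≤ theta n :=
    le_of_eq_of_le hB.symm (hxb (TysAux.fI n hn0 (m+1)))
  exact absurd h (not_lt.mpr hge)
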